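/- Assume conditional parallel trends (CPT) and no anticipation (NA), assume n₀(X) ≥ ε almost surely for some ε > 0, assume m₀ > 0, and let Δg, Δm, Δn : Ω → ℝ be bounded 𝔊-measurable random variables and Δm̄ ∈ ℝ. For r in a neighborhood of 0 on which m₀ + r·Δm̄ ≠ 0 and n₀(X) + r·Δn ≥ ε/2 almost surely, define F(r) := E[ (1{E=e}/(m₀ + r·Δm̄))·(Y_t − Y_0 − g₀ − r·Δg) − (1{E>t}·(m₀(X) + r·Δm)/((m₀ + r·Δm̄)·(n₀(X) + r·Δn)))·(Y_t − Y_0 − g₀ − r·Δg) − θ₀·1{E=e}/(m₀ + r·Δm̄) ]. Then F is differentiable at r = 0 and F′(0) = 0. (Appendix C: Neyman orthogonality of the doubly robust score for CATT(e,l) with respect to the nuisance parameters (g₀, m₀(X), n₀(X), m₀).) -/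

import Mathlib

open MeasureTheory Filter

noncomputable section

/-- Conditional expectation `E[Z | A] := E[Z·1_A] / P(A)` given an event `A`. -/
def cexp {Ω : Type*} [MeasurableSpace Ω] (μ : Measure Ω) (Z : Ω → ℝ) (A : Set Ω) : ℝ :=
  (∫ ω in A, Z ω ∂μ) / (μ A).toReal

/-- Observed outcome `Y_t := Y∞_t + Σ_{e=1}^{T} (Yᵉ_t − Y∞_t)·1{E = e}`. -/
def obsY {Ω : Type*} (T : ℕ) (E : Ω → ℕ) (Ye : ℕ → ℕ → Ω → ℝ) (Yinf : ℕ → Ω → ℝ)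
    (t : ℕ) (ω : Ω) : ℝ :=
  Yinf t ω + ∑ e ∈ Finset.Icc 1 T, (Ye e t ω - Yinf t ω) * (if E ω = e then 1 else 0)

/-- Cohort-specific average treatment effect on the treated,
`CATT(e,l) := E[Yᵉ_{e+l} − Y∞_{e+l} | E = e]`. -/
def CATT {Ω : Type*} [MeasurableSpace Ω] (μ : Measure Ω) (E : Ω → ℕ)
    (Ye : ℕ → ℕ → Ω → ℝ) (Yinf : ℕ → Ω → ℝ) (e : ℕ) (l : ℤ) : ℝ :=
  cexp μ (fun ω => Ye e ((e : ℤ) + l).toNat ω - Yinf ((e : ℤ) + l).toNat ω) {ω | E ω = e}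

/-- Parallel trends in baseline outcome. -/
def PT {Ω : Type*} [MeasurableSpace Ω] (μ : Measure Ω) (T : ℕ) (E : Ω → ℕ)
    (Yinf : ℕ → Ω → ℝ) : Prop :=
  ∀ e ∈ Finset.Icc 1 T, ∀ s ≤ T, ∀ t ≤ T,
    cexp μ (fun ω => Yinf t ω - Yinf s ω) {ω | E ω = e}
      = ∫ ω, (Yinf t ω - Yinf s ω) ∂μ

/-- No anticipatory behavior. -/
def NA {Ω : Type*} [MeasurableSpace Ω] (μ : Measure Ω) (T : ℕ)
    (Ye : ℕ → ℕ → Ω → ℝ) (Yinf : ℕ → Ω → ℝ) : Prop :=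
  ∀ e ∈ Finset.Icc 1 T, ∀ t < e, Ye e t =ᵐ[μ] Yinf t

/-- The σ-algebra generated by the covariates `X`. -/
def sigmaX {Ω 𝒳 : Type*} [m𝒳 : MeasurableSpace 𝒳] (X : Ω → 𝒳) : MeasurableSpace Ω :=
  MeasurableSpace.comap X m𝒳

/-- `g₀ := E[Y∞_t − Y∞_0 | σ(X)]` (a fixed version of the conditional expectation). -/
noncomputable def gZero {Ω 𝒳 : Type*} [MeasurableSpace Ω] [MeasurableSpace 𝒳]
    (μ : Measure Ω) (Yinf : ℕ → Ω → ℝ) (X : Ω → 𝒳) (t : ℕ) : Ω → ℝ :=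
  μ[fun ω => Yinf t ω - Yinf 0 ω | sigmaX X]

/-- `m₀(X) := E[1{E=e} | σ(X)]`. -/
noncomputable def mZeroX {Ω 𝒳 : Type*} [MeasurableSpace Ω] [MeasurableSpace 𝒳]
    (μ : Measure Ω) (E : Ω → ℕ) (X : Ω → 𝒳) (e : ℕ) : Ω → ℝ :=
  μ[fun ω => if E ω = e then (1 : ℝ) else 0 | sigmaX X]

/-- `n₀(X) := E[1{E>t} | σ(X)]`. -/
noncomputable def nZeroX {Ω 𝒳 : Type*} [MeasurableSpace Ω] [MeasurableSpace 𝒳]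
    (μ : Measure Ω) (E : Ω → ℕ) (X : Ω → 𝒳) (t : ℕ) : Ω → ℝ :=
  μ[fun ω => if t < E ω then (1 : ℝ) else 0 | sigmaX X]

/-- Conditional parallel trends in baseline outcome, given `𝔊 = σ(X)`:
`E[(Y∞_t − Y∞_s)·1{E=e} | 𝔊] = E[Y∞_t − Y∞_s | 𝔊]·E[1{E=e} | 𝔊]` a.s. -/
def CPT {Ω 𝒳 : Type*} [MeasurableSpace Ω] [MeasurableSpace 𝒳] (μ : Measure Ω) (T : ℕ)
    (E : Ω → ℕ) (Yinf : ℕ → Ω → ℝ) (X : Ω → 𝒳) : Prop :=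
  ∀ e ∈ Finset.Icc 1 T, ∀ s ≤ T, ∀ t ≤ T,
    μ[fun ω => (Yinf t ω - Yinf s ω) * (if E ω = e then (1 : ℝ) else 0) | sigmaX X]
      =ᵐ[μ] fun ω => (μ[fun ω' => Yinf t ω' - Yinf s ω' | sigmaX X]) ω
        * (mZeroX μ E X e) ω

/- ### Auxiliary lemmas -/

lemma integral_mul_condexp' {Ω : Type*} {m m0 : MeasurableSpace Ω} {μ : Measure Ω}
    (hm : m ≤ m0) [SigmaFinite (μ.trim hm)]
    {f g : Ω → ℝ} (hf : StronglyMeasurable[m] f)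
    (hfg : Integrable (fun ω => f ω * g ω) μ) (hg : Integrable g μ) :
    ∫ ω, f ω * g ω ∂μ = ∫ ω, f ω * (μ[g|m]) ω ∂μ := by
  have h1 : μ[(fun ω => f ω * g ω)|m] =ᵐ[μ] fun ω => f ω * (μ[g|m]) ω :=
    condExp_mul_of_stronglyMeasurable_left hf hfg hg
  rw [← integral_condExp hm (f := fun ω => f ω * g ω)]
  exact integral_congr_ae h1

lemma obsY_eq_of_mem {Ω : Type*} {T : ℕ} {E : Ω → ℕ} {Ye : ℕ → ℕ → Ω → ℝ} {Yinf : ℕ → Ω → ℝ}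
    {s : ℕ} {ω : Ω} (h : E ω ∈ Finset.Icc 1 T) :
    obsY T E Ye Yinf s ω = Ye (E ω) s ω := by
  unfold obsY
  rw [Finset.sum_eq_single (E ω) (fun b _ hb => by simp [Ne.symm hb]) (fun h' => absurd h h')]
  simp
set_option maxHeartbeats 2000000 in
/-- Appendix C (Neyman orthogonality of the doubly robust score): perturbing the nuisance
parameters `(g₀, m₀(X), n₀(X), m₀)` in the directions `(Δg, Δm, Δn, Δm̄)`, the map
`r ↦ E[ψ(W, θ₀, η₀ + r·Δη)]` is differentiable at `r = 0` with derivative `0`. -/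
theorem doubly_robust_score_neyman_orthogonal
    {Ω 𝒳 : Type*} [MeasurableSpace Ω] [MeasurableSpace 𝒳]
    (μ : Measure Ω) [IsProbabilityMeasure μ]
    (T : ℕ) (hT : 1 ≤ T)
    (E : Ω → ℕ) (hE : Measurable E)
    (hsupp : μ {ω | 1 ≤ E ω ∧ E ω ≤ T} = 1)
    (hpos : ∀ e ∈ Finset.Icc 1 T, 0 < μ {ω | E ω = e})
    (Ye : ℕ → ℕ → Ω → ℝ) (Yinf : ℕ → Ω → ℝ)
    (hL2e : ∀ e ∈ Finset.Icc 1 T, ∀ t ≤ T, MemLp (Ye e t) 2 μ)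
    (hL2inf : ∀ t ≤ T, MemLp (Yinf t) 2 μ)
    (X : Ω → 𝒳) (hX : Measurable X)
    (hCPT : CPT μ T E Yinf X) (hNA : NA μ T Ye Yinf)
    (l t : ℕ) (hl : l ≤ t) (ht : t + 1 ≤ T)
    (he : t - l ∈ Finset.Icc 1 T)
    (ε : ℝ) (hε : 0 < ε) (hn : ∀ᵐ ω ∂μ, ε ≤ nZeroX μ E X t ω)
    (hm0 : 0 < (μ {ω | E ω = t - l}).toReal)
    (Δg Δm Δn : Ω → ℝ) (Δmbar : ℝ)
    (hΔg : Measurable[sigmaX X] Δg) (hΔm : Measurable[sigmaX X] Δm)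
    (hΔn : Measurable[sigmaX X] Δn)
    (hΔgBd : ∃ Cg, ∀ ω, |Δg ω| ≤ Cg) (hΔmBd : ∃ Cm, ∀ ω, |Δm ω| ≤ Cm)
    (hΔnBd : ∃ Cn, ∀ ω, |Δn ω| ≤ Cn) :
    HasDerivAt
      (fun r : ℝ => ∫ ω,
        ((if E ω = t - l then (1 : ℝ) else 0) / ((μ {ω' | E ω' = t - l}).toReal + r * Δmbar)
            * (obsY T E Ye Yinf t ω - obsY T E Ye Yinf 0 ω - gZero μ Yinf X t ω - r * Δg ω)
          - (if t < E ω then (1 : ℝ) else 0) * (mZeroX μ E X (t - l) ω + r * Δm ω)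
              / (((μ {ω' | E ω' = t - l}).toReal + r * Δmbar) * (nZeroX μ E X t ω + r * Δn ω))
            * (obsY T E Ye Yinf t ω - obsY T E Ye Yinf 0 ω - gZero μ Yinf X t ω - r * Δg ω)
          - CATT μ E Ye Yinf (t - l) (l : ℤ)
              * (if E ω = t - l then (1 : ℝ) else 0)
              / ((μ {ω' | E ω' = t - l}).toReal + r * Δmbar)) ∂μ)
      0 0 := by
  classical
  obtain ⟨Cg₀, hCg₀⟩ := hΔgBd
  obtain ⟨Cm₀, hCm₀⟩ := hΔmBd
  obtain ⟨Cn₀, hCn₀⟩ := hΔnBd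
  set Cg := |Cg₀| + 1 with hCgdef
  set Cm := |Cm₀| + 1 with hCmdef
  set Cn := |Cn₀| + 1 with hCndef
  have hCg : ∀ ω, |Δg ω| ≤ Cg := fun ω => (hCg₀ ω).trans (by rw [hCgdef]; nlinarith [le_abs_self Cg₀])
  have hCm : ∀ ω, |Δm ω| ≤ Cm := fun ω => (hCm₀ ω).trans (by rw [hCmdef]; nlinarith [le_abs_self Cm₀])
  have hCn : ∀ ω, |Δn ω| ≤ Cn := fun ω => (hCn₀ ω).trans (by rw [hCndef]; nlinarith [le_abs_self Cn₀])
  have hCgpos : (0:ℝ) < Cg := by rw [hCgdef]; positivity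
  have hCmpos : (0:ℝ) < Cm := by rw [hCmdef]; positivity
  have hCnpos : (0:ℝ) < Cn := by rw [hCndef]; positivity
  -- abbreviations
  set θ := CATT μ E Ye Yinf (t - l) (l : ℤ) with hθdef
  set g0 := gZero μ Yinf X t with hg0def
  set mX := mZeroX μ E X (t - l) with hmXdef
  set nX := nZeroX μ E X t with hnXdef
  set mbar := (μ {ω' | E ω' = t - l}).toReal with hmbardef
  set F := (fun r : ℝ => ∫ ω,
        ((if E ω = t - l then (1 : ℝ) else 0) / (mbar + r * Δmbar)
            * (obsY T E Ye Yinf t ω - obsY T E Ye Yinf 0 ω - g0 ω - r * Δg ω)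
          - (if t < E ω then (1 : ℝ) else 0) * (mX ω + r * Δm ω)
              / ((mbar + r * Δmbar) * (nX ω + r * Δn ω))
            * (obsY T E Ye Yinf t ω - obsY T E Ye Yinf 0 ω - g0 ω - r * Δg ω)
          - θ * (if E ω = t - l then (1 : ℝ) else 0)
              / (mbar + r * Δmbar)) ∂μ) with hFdef
  -- basic measure-theoretic setup
  have hGle : sigmaX X ≤ ‹MeasurableSpace Ω› := hX.comap_le
  haveI : SigmaFinite (μ.trim hGle) := inferInstance
  have hIcc := Finset.mem_Icc.mp he
  have htT : t ≤ T := by omega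
  have key : ∀ (f Z : Ω → ℝ), StronglyMeasurable[sigmaX X] f →
      Integrable (fun ω => f ω * Z ω) μ → Integrable Z μ →
      ∫ ω, f ω * Z ω ∂μ = ∫ ω, f ω * (μ[Z|sigmaX X]) ω ∂μ :=
    fun f Z hf h1 h2 => integral_mul_condexp' hGle hf h1 h2
  -- unfolded descriptions of the nuisance functions
  have hg0' : g0 = μ[(fun ω => Yinf t ω - Yinf 0 ω)|sigmaX X] := hg0def
  have hmX' : mX = μ[(fun ω => if E ω = t - l then (1:ℝ) else 0)|sigmaX X] := hmXdef
  have hnX' : nX = μ[(fun ω => if t < E ω then (1:ℝ) else 0)|sigmaX X] := hnXdef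
  -- measurability
  have hindeM : Measurable (fun ω => if E ω = t - l then (1:ℝ) else 0) :=
    Measurable.ite (hE (measurableSet_singleton (t - l))) measurable_const measurable_const
  have hindtM : Measurable (fun ω => if t < E ω then (1:ℝ) else 0) :=
    Measurable.ite (hE measurableSet_Ioi) measurable_const measurable_const
  have hindM : ∀ e' : ℕ, Measurable (fun ω => if E ω = e' then (1:ℝ) else 0) := fun e' =>
    Measurable.ite (hE (measurableSet_singleton e')) measurable_const measurable_const
  have hg0smG : StronglyMeasurable[sigmaX X] g0 := by rw [hg0']; exact stronglyMeasurable_condExp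
  have hmXsmG : StronglyMeasurable[sigmaX X] mX := by rw [hmX']; exact stronglyMeasurable_condExp
  have hnXsmG : StronglyMeasurable[sigmaX X] nX := by rw [hnX']; exact stronglyMeasurable_condExp
  have hg0M : Measurable g0 := hg0smG.measurable.mono hGle le_rfl
  have hmXM : Measurable mX := hmXsmG.measurable.mono hGle le_rfl
  have hnXM : Measurable nX := hnXsmG.measurable.mono hGle le_rfl
  have hΔgM : Measurable Δg := hΔg.mono hGle le_rfl
  have hΔmM : Measurable Δm := hΔm.mono hGle le_rfl
  have hΔnM : Measurable Δn := hΔn.mono hGle le_rfl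
  -- integrability helpers
  have hbddmul : ∀ (f g : Ω → ℝ) (C : ℝ), Integrable g μ → AEStronglyMeasurable f μ →
      (∀ᵐ ω ∂μ, |f ω| ≤ C) → Integrable (fun ω => f ω * g ω) μ := by
    intro f g C hg hf hbd
    refine (hg.norm.const_mul C).mono' (hf.mul hg.1) ?_
    filter_upwards [hbd] with ω h
    simp only [Real.norm_eq_abs, abs_mul, abs_abs]
    exact mul_le_mul_of_nonneg_right h (abs_nonneg _)
  have hbddint : ∀ (f : Ω → ℝ) (C : ℝ), AEStronglyMeasurable f μ →
      (∀ᵐ ω ∂μ, |f ω| ≤ C) → Integrable f μ := by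
    intro f C hf hbd
    refine (integrable_const C).mono' hf ?_
    filter_upwards [hbd] with ω h
    simpa [Real.norm_eq_abs] using h
  have habs1 : ∀ (P : Prop) [Decidable P], |if P then (1:ℝ) else 0| ≤ 1 := by
    intro P hP
    split <;> norm_num
  have hindeI : Integrable (fun ω => if E ω = t - l then (1:ℝ) else 0) μ :=
    hbddint _ 1 hindeM.aestronglyMeasurable (ae_of_all _ fun ω => habs1 _)
  have hindtI : Integrable (fun ω => if t < E ω then (1:ℝ) else 0) μ :=
    hbddint _ 1 hindtM.aestronglyMeasurable (ae_of_all _ fun ω => habs1 _)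
  have hindI : ∀ e' : ℕ, Integrable (fun ω => if E ω = e' then (1:ℝ) else 0) μ := fun e' =>
    hbddint _ 1 (hindM e').aestronglyMeasurable (ae_of_all _ fun ω => habs1 _)
  have hYinfI : ∀ s ≤ T, Integrable (Yinf s) μ := fun s hs => (hL2inf s hs).integrable one_le_two
  have hYtI : Integrable (Yinf t) μ := hYinfI t htT
  have hY0I : Integrable (Yinf 0) μ := hYinfI 0 (Nat.zero_le T)
  have hdiffI : Integrable (fun ω => Yinf t ω - Yinf 0 ω) μ := hYtI.sub hY0I
  have hg0I : Integrable g0 μ := by rw [hg0']; exact integrable_condExp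
  have hΔgI : Integrable Δg μ := hbddint _ Cg hΔgM.aestronglyMeasurable (ae_of_all _ hCg)
  have hobsI : ∀ s, s ≤ T → Integrable (obsY T E Ye Yinf s) μ := by
    intro s hs
    have h1 : Integrable (Yinf s) μ := hYinfI s hs
    have h2 : Integrable (fun ω => ∑ e' ∈ Finset.Icc 1 T,
        (Ye e' s ω - Yinf s ω) * (if E ω = e' then 1 else 0)) μ := by
      apply integrable_finset_sum
      intro e' he'
      have h3 : Integrable (fun ω => Ye e' s ω - Yinf s ω) μ :=
        ((hL2e e' he' s hs).integrable one_le_two).sub h1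
      have := hbddmul _ (fun ω => Ye e' s ω - Yinf s ω) 1 h3
        (hindM e').aestronglyMeasurable (ae_of_all _ fun ω => habs1 _)
      exact this.congr (ae_of_all _ fun ω => by ring)
    exact h1.add h2
  have huI : Integrable (fun ω => obsY T E Ye Yinf t ω - obsY T E Ye Yinf 0 ω) μ :=
    (hobsI t htT).sub (hobsI 0 (Nat.zero_le T))
  -- a.e. bounds on the conditional probabilities
  have h01 : ∀ (f : Ω → ℝ), (∀ ω, 0 ≤ f ω ∧ f ω ≤ 1) → Integrable f μ →
      ∀ᵐ ω ∂μ, 0 ≤ (μ[f|sigmaX X]) ω ∧ (μ[f|sigmaX X]) ω ≤ 1 := by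
    intro f hf hfI
    have h1 : 0 ≤ᵐ[μ] μ[f|sigmaX X] := condExp_nonneg (ae_of_all _ fun ω => (hf ω).1)
    have h2 : μ[f|sigmaX X] ≤ᵐ[μ] μ[(fun _ => (1:ℝ))|sigmaX X] :=
      condExp_mono hfI (integrable_const 1) (ae_of_all _ fun ω => (hf ω).2)
    have h3 : μ[(fun _ => (1:ℝ))|sigmaX X] = fun _ => (1:ℝ) := condExp_const hGle (1:ℝ)
    rw [h3] at h2
    filter_upwards [h1, h2] with ω hω1 hω2
    exact ⟨hω1, hω2⟩
  have hmX01 : ∀ᵐ ω ∂μ, 0 ≤ mX ω ∧ mX ω ≤ 1 := by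
    rw [hmX']
    exact h01 _ (fun ω => by split <;> norm_num) hindeI
  have hnX01 : ∀ᵐ ω ∂μ, 0 ≤ nX ω ∧ nX ω ≤ 1 := by
    rw [hnX']
    exact h01 _ (fun ω => by split <;> norm_num) hindtI
  -- the support of E
  have hEae : ∀ᵐ ω ∂μ, 1 ≤ E ω ∧ E ω ≤ T := by
    have hsM : MeasurableSet {ω | 1 ≤ E ω ∧ E ω ≤ T} := hE measurableSet_Icc
    have hc := measure_compl hsM (measure_ne_top μ _)
    rw [hsupp, measure_univ, tsub_self] at hc
    rw [ae_iff]
    exact hc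
  -- no-anticipation facts
  have ha0 : ∀ᵐ ω ∂μ, ∀ e' ∈ Finset.Icc 1 T, Ye e' 0 ω = Yinf 0 ω := by
    rw [eventually_all_finset]
    intro e' he'
    exact hNA e' he' 0 (by have := Finset.mem_Icc.mp he'; omega)
  have hat : ∀ᵐ ω ∂μ, ∀ e' ∈ Finset.Icc (t+1) T, Ye e' t ω = Yinf t ω := by
    rw [eventually_all_finset]
    intro e' he'
    have h := Finset.mem_Icc.mp he'
    exact hNA e' (Finset.mem_Icc.mpr ⟨by omega, h.2⟩) t (by omega)
  have hIccsub : Finset.Icc (t+1) T ⊆ Finset.Icc 1 T := by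
    intro x hx; rw [Finset.mem_Icc] at *; omega
  -- claim A
  have claimA : (fun ω => (if E ω = t - l then (1:ℝ) else 0)
        * (obsY T E Ye Yinf t ω - obsY T E Ye Yinf 0 ω))
      =ᵐ[μ] fun ω => (if E ω = t - l then (1:ℝ) else 0) * (Ye (t-l) t ω - Yinf t ω)
        + (Yinf t ω - Yinf 0 ω) * (if E ω = t - l then (1:ℝ) else 0) := by
    filter_upwards [hNA (t-l) he 0 (by omega)] with ω hω
    by_cases hEω : E ω = t - l
    · have hmem : E ω ∈ Finset.Icc 1 T := by rw [hEω]; exact he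
      rw [obsY_eq_of_mem hmem, obsY_eq_of_mem hmem, hEω, hω]
      simp only [if_pos rfl]
      ring
    · simp [hEω]
  -- claim B
  have claimB : (fun ω => (obsY T E Ye Yinf t ω - obsY T E Ye Yinf 0 ω)
        * (if t < E ω then (1:ℝ) else 0))
      =ᵐ[μ] fun ω => (Yinf t ω - Yinf 0 ω) * (if t < E ω then (1:ℝ) else 0) := by
    filter_upwards [hEae, ha0, hat] with ω h1 h2 h3
    by_cases hEω : t < E ω
    · have hmem : E ω ∈ Finset.Icc 1 T := Finset.mem_Icc.mpr ⟨h1.1, h1.2⟩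
      rw [obsY_eq_of_mem hmem, obsY_eq_of_mem hmem, h2 _ hmem,
        h3 _ (Finset.mem_Icc.mpr ⟨by omega, h1.2⟩)]
    · simp [hEω]
  -- indicator of {E > t} as a finite sum
  have hindtsum : (fun ω => if t < E ω then (1:ℝ) else 0) =ᵐ[μ]
      (fun ω => ∑ e' ∈ Finset.Icc (t+1) T, (if E ω = e' then (1:ℝ) else 0)) := by
    filter_upwards [hEae] with ω h1
    rw [Finset.sum_ite_eq]
    by_cases h : t < E ω
    · rw [if_pos h, if_pos (Finset.mem_Icc.mpr ⟨by omega, h1.2⟩)]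
    · rw [if_neg h, if_neg (by rw [Finset.mem_Icc]; omega)]
  have hnXsum : nX =ᵐ[μ] fun ω => ∑ e' ∈ Finset.Icc (t+1) T, (mZeroX μ E X e') ω := by
    rw [hnX']
    calc μ[(fun ω => if t < E ω then (1:ℝ) else 0)|sigmaX X]
        =ᵐ[μ] μ[(fun ω => ∑ e' ∈ Finset.Icc (t+1) T, (if E ω = e' then (1:ℝ) else 0))|sigmaX X] :=
          condExp_congr_ae hindtsum
      _ =ᵐ[μ] fun ω => ∑ e' ∈ Finset.Icc (t+1) T, (mZeroX μ E X e') ω := by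
          have hfe : (fun ω => ∑ e' ∈ Finset.Icc (t+1) T, (if E ω = e' then (1:ℝ) else 0))
              = ∑ e' ∈ Finset.Icc (t+1) T, (fun ω => if E ω = e' then (1:ℝ) else 0) := by
            funext ω
            simp
          rw [hfe]
          have h := condExp_finset_sum (m := sigmaX X) (μ := μ) (s := Finset.Icc (t+1) T)
            (f := fun e' ω => if E ω = e' then (1:ℝ) else 0) (fun i _ => hindI i)
          filter_upwards [h] with ω hω
          rw [hω]
          simp [mZeroX]
  -- conditional parallel trends for the "not yet treated" indicator
  have hb : μ[(fun ω => (Yinf t ω - Yinf 0 ω) * (if t < E ω then (1:ℝ) else 0))|sigmaX X]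
      =ᵐ[μ] fun ω => g0 ω * nX ω := by
    have hZsum : (fun ω => (Yinf t ω - Yinf 0 ω) * (if t < E ω then (1:ℝ) else 0)) =ᵐ[μ]
        fun ω => ∑ e' ∈ Finset.Icc (t+1) T,
          (Yinf t ω - Yinf 0 ω) * (if E ω = e' then (1:ℝ) else 0) := by
      filter_upwards [hindtsum] with ω hω
      rw [← Finset.mul_sum, ← hω]
    have htermI : ∀ e' : ℕ, Integrable
        (fun ω => (Yinf t ω - Yinf 0 ω) * (if E ω = e' then (1:ℝ) else 0)) μ := by
      intro e'
      have := hbddmul _ (fun ω => Yinf t ω - Yinf 0 ω) 1 hdiffI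
        (hindM e').aestronglyMeasurable (ae_of_all _ fun ω => habs1 _)
      exact this.congr (ae_of_all _ fun ω => by ring)
    have hterm : ∀ᵐ ω ∂μ, ∀ e' ∈ Finset.Icc (t+1) T,
        (μ[(fun ω => (Yinf t ω - Yinf 0 ω) * (if E ω = e' then (1:ℝ) else 0))|sigmaX X]) ω
          = g0 ω * mZeroX μ E X e' ω := by
      rw [eventually_all_finset]
      intro e' he'
      exact hCPT e' (hIccsub he') 0 (Nat.zero_le T) t htT
    calc μ[(fun ω => (Yinf t ω - Yinf 0 ω) * (if t < E ω then (1:ℝ) else 0))|sigmaX X]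
        =ᵐ[μ] μ[(fun ω => ∑ e' ∈ Finset.Icc (t+1) T,
            (Yinf t ω - Yinf 0 ω) * (if E ω = e' then (1:ℝ) else 0))|sigmaX X] :=
          condExp_congr_ae hZsum
      _ =ᵐ[μ] fun ω => ∑ e' ∈ Finset.Icc (t+1) T,
          (μ[(fun ω => (Yinf t ω - Yinf 0 ω) * (if E ω = e' then (1:ℝ) else 0))|sigmaX X]) ω := by
          have hfe : (fun ω => ∑ e' ∈ Finset.Icc (t+1) T,
                (Yinf t ω - Yinf 0 ω) * (if E ω = e' then (1:ℝ) else 0))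
              = ∑ e' ∈ Finset.Icc (t+1) T,
                (fun ω => (Yinf t ω - Yinf 0 ω) * (if E ω = e' then (1:ℝ) else 0)) := by
            funext ω
            simp
          rw [hfe]
          have h := condExp_finset_sum (m := sigmaX X) (μ := μ) (s := Finset.Icc (t+1) T)
            (f := fun e' ω => (Yinf t ω - Yinf 0 ω) * (if E ω = e' then (1:ℝ) else 0))
            (fun i _ => htermI i)
          filter_upwards [h] with ω hω
          rw [hω]
          simp
      _ =ᵐ[μ] fun ω => g0 ω * nX ω := by
          filter_upwards [hterm, hnXsum] with ω hω hn2
          rw [Finset.sum_congr rfl (hω), hn2, Finset.mul_sum]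
  -- key integral identities (independent of r)
  have I1 : ∫ ω, (Yinf t ω - Yinf 0 ω) * (if E ω = t - l then (1:ℝ) else 0) ∂μ
      = ∫ ω, g0 ω * mX ω ∂μ := by
    rw [← integral_condExp hGle (f := fun ω => (Yinf t ω - Yinf 0 ω)
      * (if E ω = t - l then (1:ℝ) else 0))]
    refine integral_congr_ae ((hCPT (t-l) he 0 (Nat.zero_le T) t htT).trans ?_)
    exact ae_of_all _ fun ω => rfl
  have I2 : ∫ ω, g0 ω * (if E ω = t - l then (1:ℝ) else 0) ∂μ = ∫ ω, g0 ω * mX ω ∂μ := by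
    have hint : Integrable (fun ω => g0 ω * (if E ω = t - l then (1:ℝ) else 0)) μ := by
      have := hbddmul (fun ω => if E ω = t - l then (1:ℝ) else 0) g0 1 hg0I
        hindeM.aestronglyMeasurable (ae_of_all _ fun ω => habs1 _)
      exact this.congr (ae_of_all _ fun ω => by ring)
    rw [key g0 _ hg0smG hint hindeI, ← hmX']
  have I3 : ∫ ω, Δg ω * (if E ω = t - l then (1:ℝ) else 0) ∂μ = ∫ ω, Δg ω * mX ω ∂μ := by
    have hint : Integrable (fun ω => Δg ω * (if E ω = t - l then (1:ℝ) else 0)) μ := by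
      have := hbddmul (fun ω => if E ω = t - l then (1:ℝ) else 0) Δg 1 hΔgI
        hindeM.aestronglyMeasurable (ae_of_all _ fun ω => habs1 _)
      exact this.congr (ae_of_all _ fun ω => by ring)
    rw [key Δg _ hΔg.stronglyMeasurable hint hindeI, ← hmX']
  -- the CATT identity
  have hindeInt : ∫ ω, (if E ω = t - l then (1:ℝ) else 0) ∂μ = mbar := by
    have h1 : (fun ω => if E ω = t - l then (1:ℝ) else 0)
        = Set.indicator {ω | E ω = t - l} (fun _ => (1:ℝ)) := by
      funext ω
      by_cases hω : E ω = t - l <;> simp [Set.indicator_apply, hω, Set.mem_setOf_eq]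
    rw [h1, hmbardef]
    exact integral_indicator_one (hE (measurableSet_singleton (t - l)))
  have hθmbar : ∫ ω, (if E ω = t - l then (1:ℝ) else 0) * (Ye (t-l) t ω - Yinf t ω) ∂μ
      = θ * mbar := by
    have htl : (((t - l : ℕ) : ℤ) + (l : ℤ)).toNat = t := by omega
    have h1 : θ = (∫ ω in {ω | E ω = t - l}, (Ye (t-l) t ω - Yinf t ω) ∂μ) / mbar := by
      rw [hθdef]
      unfold CATT cexp
      rw [htl, hmbardef]
    rw [h1, div_mul_cancel₀ _ (ne_of_gt hm0)]
    rw [← integral_indicator (show MeasurableSet {ω | E ω = t - l} from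
      hE (measurableSet_singleton (t - l)))]
    refine integral_congr_ae (ae_of_all _ fun ω => ?_)
    by_cases hω : E ω = t - l <;>
      simp [Set.indicator_apply, hω, Set.mem_setOf_eq]
  -- the derivative bound
  set δ := min 1 (min (mbar / (2 * (|Δmbar| + 1))) (ε / (2 * Cn))) with hδdef
  have hδpos : 0 < δ := by
    rw [hδdef]
    have h1 : (0:ℝ) < mbar / (2 * (|Δmbar| + 1)) := by positivity
    have h2 : (0:ℝ) < ε / (2 * Cn) := by positivity
    simp [h1, h2]
  set C := (2 / mbar) * ((Cm + Cn) * (2 / ε) * Cg) with hCdef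
  have hC0 : 0 ≤ C := by rw [hCdef]; positivity
  have hFb : ∀ r : ℝ, |r| ≤ δ → |F r| ≤ C * r ^ 2 := by
    intro r hr
    have hr1 : |r| ≤ 1 := hr.trans (min_le_left _ _)
    have hrm : |r| ≤ mbar / (2 * (|Δmbar| + 1)) :=
      hr.trans ((min_le_right _ _).trans (min_le_left _ _))
    have hrn : |r| ≤ ε / (2 * Cn) := hr.trans ((min_le_right _ _).trans (min_le_right _ _))
    -- the perturbed denominators are bounded below
    have hMr : mbar / 2 ≤ mbar + r * Δmbar := by
      have h2 : |r| * (2 * (|Δmbar| + 1)) ≤ mbar :=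
        (le_div_iff₀ (by positivity)).mp hrm
      have h3 : -(|r| * |Δmbar|) ≤ r * Δmbar := by
        rw [← abs_mul]; exact neg_abs_le _
      have h4 : |r| * |Δmbar| ≤ |r| * (|Δmbar| + 1) :=
        mul_le_mul_of_nonneg_left (by linarith) (abs_nonneg r)
      linarith
    have hMrpos : 0 < mbar + r * Δmbar := lt_of_lt_of_le (by positivity) hMr
    have hDae : ∀ᵐ ω ∂μ, ε / 2 ≤ nX ω + r * Δn ω := by
      filter_upwards [hn] with ω hω
      have h2 : |r| * (2 * Cn) ≤ ε := (le_div_iff₀ (by positivity)).mp hrn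
      have h3 : -(|r| * |Δn ω|) ≤ r * Δn ω := by
        rw [← abs_mul]; exact neg_abs_le _
      have h4 : |Δn ω| ≤ Cn := hCn ω
      have h5 : |r| * |Δn ω| ≤ |r| * Cn := mul_le_mul_of_nonneg_left h4 (abs_nonneg r)
      linarith
    have hDpos : ∀ᵐ ω ∂μ, 0 < nX ω + r * Δn ω := by
      filter_upwards [hDae] with ω hω
      exact lt_of_lt_of_le (by positivity) hω
    -- the perturbed propensity ratio
    set h := fun ω => (mX ω + r * Δm ω) / (nX ω + r * Δn ω) with hhdef
    have hhM : Measurable h :=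
      (hmXM.add (hΔmM.const_mul r)).div (hnXM.add (hΔnM.const_mul r))
    have hhG : StronglyMeasurable[sigmaX X] h := by
      refine Measurable.stronglyMeasurable ?_
      exact Measurable.div
        (Measurable.add hmXsmG.measurable (hΔm.const_mul r))
        (Measurable.add hnXsmG.measurable (hΔn.const_mul r))
    set Kh := (1 + Cm) * (2 / ε) with hKhdef
    have hKh0 : 0 ≤ Kh := by rw [hKhdef]; positivity
    have hhbd : ∀ᵐ ω ∂μ, |h ω| ≤ Kh := by
      filter_upwards [hDae, hmX01] with ω h1 h2
      have hD : 0 < nX ω + r * Δn ω := lt_of_lt_of_le (by positivity) h1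
      rw [hhdef]
      simp only
      rw [abs_div, abs_of_pos hD]
      have hnum : |mX ω + r * Δm ω| ≤ 1 + Cm := by
        calc |mX ω + r * Δm ω| ≤ |mX ω| + |r * Δm ω| := abs_add_le _ _
          _ ≤ 1 + Cm := by
            rw [abs_mul]
            have h5 : |mX ω| ≤ 1 := abs_le.mpr ⟨by linarith [h2.1], h2.2⟩
            have h6 : |r| * |Δm ω| ≤ 1 * Cm :=
              mul_le_mul hr1 (hCm ω) (abs_nonneg _) zero_le_one
            linarith
      calc |mX ω + r * Δm ω| / (nX ω + r * Δn ω) ≤ (1 + Cm) / (ε / 2) :=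
            div_le_div₀ (by positivity) hnum (by positivity) h1
        _ = Kh := by rw [hKhdef]; field_simp
    have hhSM : AEStronglyMeasurable h μ := hhM.aestronglyMeasurable
    -- integrability of the six pieces
    have hf1I : Integrable (fun ω => (if E ω = t - l then (1:ℝ) else 0)
        * (obsY T E Ye Yinf t ω - obsY T E Ye Yinf 0 ω)) μ :=
      hbddmul _ _ 1 huI hindeM.aestronglyMeasurable (ae_of_all _ fun ω => habs1 _)
    have hf2I : Integrable (fun ω => g0 ω * (if E ω = t - l then (1:ℝ) else 0)) μ := by
      have := hbddmul (fun ω => if E ω = t - l then (1:ℝ) else 0) g0 1 hg0I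
        hindeM.aestronglyMeasurable (ae_of_all _ fun ω => habs1 _)
      exact this.congr (ae_of_all _ fun ω => by ring)
    have hf3I : Integrable (fun ω => Δg ω * (if E ω = t - l then (1:ℝ) else 0)) μ := by
      have := hbddmul (fun ω => if E ω = t - l then (1:ℝ) else 0) Δg 1 hΔgI
        hindeM.aestronglyMeasurable (ae_of_all _ fun ω => habs1 _)
      exact this.congr (ae_of_all _ fun ω => by ring)
    have hUindI : Integrable (fun ω => (obsY T E Ye Yinf t ω - obsY T E Ye Yinf 0 ω)
        * (if t < E ω then (1:ℝ) else 0)) μ := by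
      have := hbddmul (fun ω => if t < E ω then (1:ℝ) else 0) _ 1 huI
        hindtM.aestronglyMeasurable (ae_of_all _ fun ω => habs1 _)
      exact this.congr (ae_of_all _ fun ω => by ring)
    have hf4I : Integrable (fun ω => h ω * ((obsY T E Ye Yinf t ω - obsY T E Ye Yinf 0 ω)
        * (if t < E ω then (1:ℝ) else 0))) μ :=
      hbddmul _ _ Kh hUindI hhSM hhbd
    have hhindbd : ∀ᵐ ω ∂μ, |h ω * (if t < E ω then (1:ℝ) else 0)| ≤ Kh := by
      filter_upwards [hhbd] with ω hω
      rw [abs_mul]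
      calc |h ω| * |if t < E ω then (1:ℝ) else 0| ≤ Kh * 1 :=
            mul_le_mul hω (habs1 _) (abs_nonneg _) hKh0
        _ = Kh := mul_one Kh
    have hf5I : Integrable (fun ω => h ω * g0 ω * (if t < E ω then (1:ℝ) else 0)) μ := by
      have := hbddmul (fun ω => h ω * (if t < E ω then (1:ℝ) else 0)) g0 Kh hg0I
        ((hhM.mul hindtM).aestronglyMeasurable) hhindbd
      exact this.congr (ae_of_all _ fun ω => by ring)
    have hhΔgbd : ∀ᵐ ω ∂μ, |h ω * Δg ω| ≤ Kh * Cg := by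
      filter_upwards [hhbd] with ω hω
      rw [abs_mul]
      exact mul_le_mul hω (hCg ω) (abs_nonneg _) hKh0
    have hf6I : Integrable (fun ω => h ω * Δg ω * (if t < E ω then (1:ℝ) else 0)) μ := by
      have := hbddmul (fun ω => h ω * Δg ω) _ (Kh * Cg) hindtI
        ((hhM.mul hΔgM).aestronglyMeasurable) hhΔgbd
      exact this
    have hZI : Integrable (fun ω => (Yinf t ω - Yinf 0 ω) * (if t < E ω then (1:ℝ) else 0)) μ := by
      have := hbddmul (fun ω => if t < E ω then (1:ℝ) else 0) _ 1 hdiffI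
        hindtM.aestronglyMeasurable (ae_of_all _ fun ω => habs1 _)
      exact this.congr (ae_of_all _ fun ω => by ring)
    have hI3' : Integrable (fun ω => Δg ω * mX ω) μ := by
      have := hbddmul Δg mX Cg (by rw [hmX']; exact integrable_condExp)
        hΔgM.aestronglyMeasurable (ae_of_all _ hCg)
      exact this
    have hI6' : Integrable (fun ω => h ω * Δg ω * nX ω) μ := by
      have := hbddmul (fun ω => h ω * Δg ω) nX (Kh * Cg)
        (by rw [hnX']; exact integrable_condExp)
        ((hhM.mul hΔgM).aestronglyMeasurable) hhΔgbd
      exact this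
    -- rewrite F r
    have hFr : F r = (mbar + r * Δmbar)⁻¹ * ∫ ω,
        (((if E ω = t - l then (1:ℝ) else 0)
              * (obsY T E Ye Yinf t ω - obsY T E Ye Yinf 0 ω)
            - g0 ω * (if E ω = t - l then (1:ℝ) else 0)
            - r * (Δg ω * (if E ω = t - l then (1:ℝ) else 0)))
          - (h ω * ((obsY T E Ye Yinf t ω - obsY T E Ye Yinf 0 ω)
                * (if t < E ω then (1:ℝ) else 0))
            - h ω * g0 ω * (if t < E ω then (1:ℝ) else 0)
            - r * (h ω * Δg ω * (if t < E ω then (1:ℝ) else 0)))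
          - θ * (if E ω = t - l then (1:ℝ) else 0)) ∂μ := by
      rw [hFdef]
      rw [← integral_const_mul]
      refine integral_congr_ae (ae_of_all _ fun ω => ?_)
      simp only [hhdef]
      simp only [div_eq_mul_inv, mul_inv]
      ring
    -- split the integral
    have hs1 : ∫ ω,
        (((if E ω = t - l then (1:ℝ) else 0)
              * (obsY T E Ye Yinf t ω - obsY T E Ye Yinf 0 ω)
            - g0 ω * (if E ω = t - l then (1:ℝ) else 0)
            - r * (Δg ω * (if E ω = t - l then (1:ℝ) else 0)))
          - (h ω * ((obsY T E Ye Yinf t ω - obsY T E Ye Yinf 0 ω)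
                * (if t < E ω then (1:ℝ) else 0))
            - h ω * g0 ω * (if t < E ω then (1:ℝ) else 0)
            - r * (h ω * Δg ω * (if t < E ω then (1:ℝ) else 0)))
          - θ * (if E ω = t - l then (1:ℝ) else 0)) ∂μ
        = (((∫ ω, (if E ω = t - l then (1:ℝ) else 0)
              * (obsY T E Ye Yinf t ω - obsY T E Ye Yinf 0 ω) ∂μ)
            - (∫ ω, g0 ω * (if E ω = t - l then (1:ℝ) else 0) ∂μ)
            - r * (∫ ω, Δg ω * (if E ω = t - l then (1:ℝ) else 0) ∂μ))
          - ((∫ ω, h ω * ((obsY T E Ye Yinf t ω - obsY T E Ye Yinf 0 ω)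
                * (if t < E ω then (1:ℝ) else 0)) ∂μ)
            - (∫ ω, h ω * g0 ω * (if t < E ω then (1:ℝ) else 0) ∂μ)
            - r * (∫ ω, h ω * Δg ω * (if t < E ω then (1:ℝ) else 0) ∂μ))
          - θ * mbar) := by
      have hI12 : Integrable (fun ω => (if E ω = t - l then (1:ℝ) else 0)
            * (obsY T E Ye Yinf t ω - obsY T E Ye Yinf 0 ω)
          - g0 ω * (if E ω = t - l then (1:ℝ) else 0)) μ := hf1I.sub hf2I
      have hI123 : Integrable (fun ω => (if E ω = t - l then (1:ℝ) else 0)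
            * (obsY T E Ye Yinf t ω - obsY T E Ye Yinf 0 ω)
          - g0 ω * (if E ω = t - l then (1:ℝ) else 0)
          - r * (Δg ω * (if E ω = t - l then (1:ℝ) else 0))) μ :=
        hI12.sub (hf3I.const_mul r)
      have hI45 : Integrable (fun ω => h ω * ((obsY T E Ye Yinf t ω - obsY T E Ye Yinf 0 ω)
            * (if t < E ω then (1:ℝ) else 0))
          - h ω * g0 ω * (if t < E ω then (1:ℝ) else 0)) μ := hf4I.sub hf5I
      have hI456 : Integrable (fun ω => h ω * ((obsY T E Ye Yinf t ω - obsY T E Ye Yinf 0 ω)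
            * (if t < E ω then (1:ℝ) else 0))
          - h ω * g0 ω * (if t < E ω then (1:ℝ) else 0)
          - r * (h ω * Δg ω * (if t < E ω then (1:ℝ) else 0))) μ :=
        hI45.sub (hf6I.const_mul r)
      have hIbig : Integrable (fun ω =>
          ((if E ω = t - l then (1:ℝ) else 0)
              * (obsY T E Ye Yinf t ω - obsY T E Ye Yinf 0 ω)
            - g0 ω * (if E ω = t - l then (1:ℝ) else 0)
            - r * (Δg ω * (if E ω = t - l then (1:ℝ) else 0)))
          - (h ω * ((obsY T E Ye Yinf t ω - obsY T E Ye Yinf 0 ω)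
                * (if t < E ω then (1:ℝ) else 0))
            - h ω * g0 ω * (if t < E ω then (1:ℝ) else 0)
            - r * (h ω * Δg ω * (if t < E ω then (1:ℝ) else 0)))) μ := hI123.sub hI456
      have hIθ : Integrable (fun ω => θ * (if E ω = t - l then (1:ℝ) else 0)) μ :=
        hindeI.const_mul θ
      rw [integral_sub hIbig hIθ, integral_sub hI123 hI456,
        integral_sub hI12 (hf3I.const_mul r), integral_sub hf1I hf2I,
        integral_sub hI45 (hf6I.const_mul r), integral_sub hf4I hf5I,
        integral_const_mul, integral_const_mul, integral_const_mul, hindeInt]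
    -- compute the six integrals
    have hIA1 : Integrable (fun ω => (if E ω = t - l then (1:ℝ) else 0)
        * (Ye (t-l) t ω - Yinf t ω)) μ :=
      hbddmul _ _ 1 (((hL2e (t-l) he t htT).integrable one_le_two).sub hYtI)
        hindeM.aestronglyMeasurable (ae_of_all _ fun ω => habs1 _)
    have hIA2 : Integrable (fun ω => (Yinf t ω - Yinf 0 ω)
        * (if E ω = t - l then (1:ℝ) else 0)) μ := by
      have := hbddmul (fun ω => if E ω = t - l then (1:ℝ) else 0) _ 1 hdiffI
        hindeM.aestronglyMeasurable (ae_of_all _ fun ω => habs1 _)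
      exact this.congr (ae_of_all _ fun ω => by ring)
    have hf1eq : ∫ ω, (if E ω = t - l then (1:ℝ) else 0)
        * (obsY T E Ye Yinf t ω - obsY T E Ye Yinf 0 ω) ∂μ
        = θ * mbar + ∫ ω, g0 ω * mX ω ∂μ := by
      rw [integral_congr_ae claimA, integral_add hIA1 hIA2, hθmbar, I1]
    have hf4eq : ∫ ω, h ω * ((obsY T E Ye Yinf t ω - obsY T E Ye Yinf 0 ω)
          * (if t < E ω then (1:ℝ) else 0)) ∂μ
        = ∫ ω, h ω * (g0 ω * nX ω) ∂μ := by
      have e1 : ∫ ω, h ω * ((obsY T E Ye Yinf t ω - obsY T E Ye Yinf 0 ω)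
            * (if t < E ω then (1:ℝ) else 0)) ∂μ
          = ∫ ω, h ω * ((Yinf t ω - Yinf 0 ω) * (if t < E ω then (1:ℝ) else 0)) ∂μ := by
        refine integral_congr_ae ?_
        filter_upwards [claimB] with ω hω
        rw [hω]
      have e2 : ∫ ω, h ω * ((Yinf t ω - Yinf 0 ω) * (if t < E ω then (1:ℝ) else 0)) ∂μ
          = ∫ ω, h ω * (μ[(fun ω => (Yinf t ω - Yinf 0 ω)
              * (if t < E ω then (1:ℝ) else 0))|sigmaX X]) ω ∂μ :=
        key h _ hhG (hbddmul _ _ Kh hZI hhSM hhbd) hZI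
      have e3 : ∫ ω, h ω * (μ[(fun ω => (Yinf t ω - Yinf 0 ω)
            * (if t < E ω then (1:ℝ) else 0))|sigmaX X]) ω ∂μ
          = ∫ ω, h ω * (g0 ω * nX ω) ∂μ := by
        refine integral_congr_ae ?_
        filter_upwards [hb] with ω hω
        rw [hω]
      rw [e1, e2, e3]
    have hf5eq : ∫ ω, h ω * g0 ω * (if t < E ω then (1:ℝ) else 0) ∂μ
        = ∫ ω, h ω * g0 ω * nX ω ∂μ := by
      rw [hnX']
      exact key (fun ω => h ω * g0 ω) _
        ((hhG.measurable.mul hg0smG.measurable).stronglyMeasurable) hf5I hindtI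
    have hf6eq : ∫ ω, h ω * Δg ω * (if t < E ω then (1:ℝ) else 0) ∂μ
        = ∫ ω, h ω * Δg ω * nX ω ∂μ := by
      rw [hnX']
      exact key (fun ω => h ω * Δg ω) _
        ((hhG.measurable.mul hΔg).stronglyMeasurable) hf6I hindtI
    have hassoc : ∫ ω, h ω * (g0 ω * nX ω) ∂μ = ∫ ω, h ω * g0 ω * nX ω ∂μ :=
      integral_congr_ae (ae_of_all _ fun ω => by ring)
    have hsub : ∫ ω, (h ω * Δg ω * nX ω - Δg ω * mX ω) ∂μ
        = (∫ ω, h ω * Δg ω * nX ω ∂μ) - ∫ ω, Δg ω * mX ω ∂μ :=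
      integral_sub hI6' hI3'
    -- the value of F r
    have hFval : F r = (mbar + r * Δmbar)⁻¹
        * (r * ∫ ω, (h ω * Δg ω * nX ω - Δg ω * mX ω) ∂μ) := by
      rw [hFr, hs1, hf1eq, I2, I3, hf4eq, hassoc, hf5eq, hf6eq, hsub]
      ring
    -- the quadratic bound
    have hbd2 : ∀ᵐ ω ∂μ, ‖h ω * Δg ω * nX ω - Δg ω * mX ω‖
        ≤ |r| * ((Cm + Cn) * (2 / ε) * Cg) := by
      filter_upwards [hDae, hmX01, hnX01] with ω h1 h2 h3
      have hD : 0 < nX ω + r * Δn ω := lt_of_lt_of_le (by positivity) h1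
      have e1 : h ω * Δg ω * nX ω - Δg ω * mX ω
          = Δg ω * (r * (Δm ω * nX ω - mX ω * Δn ω) / (nX ω + r * Δn ω)) := by
        simp only [hhdef]
        field_simp
        ring
      rw [Real.norm_eq_abs, e1, abs_mul, abs_div, abs_mul, abs_of_pos hD]
      have hnum : |Δm ω * nX ω - mX ω * Δn ω| ≤ Cm + Cn := by
        have hnX1 : |nX ω| ≤ 1 := abs_le.mpr ⟨by linarith [h3.1], h3.2⟩
        have hmX1 : |mX ω| ≤ 1 := abs_le.mpr ⟨by linarith [h2.1], h2.2⟩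
        calc |Δm ω * nX ω - mX ω * Δn ω| ≤ |Δm ω * nX ω| + |mX ω * Δn ω| := abs_sub _ _
          _ ≤ Cm * 1 + 1 * Cn := by
              rw [abs_mul, abs_mul]
              exact add_le_add (mul_le_mul (hCm ω) hnX1 (abs_nonneg _) hCmpos.le)
                (mul_le_mul hmX1 (hCn ω) (abs_nonneg _) zero_le_one)
          _ = Cm + Cn := by ring
      have hfrac : |r| * |Δm ω * nX ω - mX ω * Δn ω| / (nX ω + r * Δn ω)
          ≤ |r| * (Cm + Cn) / (ε / 2) :=
        div_le_div₀ (by positivity) (mul_le_mul_of_nonneg_left hnum (abs_nonneg r))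
          (by positivity) h1
      calc |Δg ω| * (|r| * |Δm ω * nX ω - mX ω * Δn ω| / (nX ω + r * Δn ω))
          ≤ Cg * (|r| * (Cm + Cn) / (ε / 2)) :=
            mul_le_mul (hCg ω) hfrac (by positivity) hCgpos.le
        _ = |r| * ((Cm + Cn) * (2 / ε) * Cg) := by
            field_simp
    have hIb : ‖∫ ω, (h ω * Δg ω * nX ω - Δg ω * mX ω) ∂μ‖
        ≤ |r| * ((Cm + Cn) * (2 / ε) * Cg) := by
      have := norm_integral_le_of_norm_le_const (μ := μ) hbd2
      simpa [measure_univ] using this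
    have hMinv : |(mbar + r * Δmbar)⁻¹| ≤ 2 / mbar := by
      rw [abs_of_pos (inv_pos.mpr hMrpos)]
      calc (mbar + r * Δmbar)⁻¹ ≤ (mbar / 2)⁻¹ :=
            inv_anti₀ (by positivity) hMr
        _ = 2 / mbar := by rw [inv_div]
    calc |F r| = |(mbar + r * Δmbar)⁻¹|
          * (|r| * ‖∫ ω, (h ω * Δg ω * nX ω - Δg ω * mX ω) ∂μ‖) := by
          rw [hFval, abs_mul, abs_mul, Real.norm_eq_abs]
      _ ≤ (2 / mbar) * (|r| * (|r| * ((Cm + Cn) * (2 / ε) * Cg))) := by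
          refine mul_le_mul hMinv ?_ (by positivity) (by positivity)
          exact mul_le_mul_of_nonneg_left hIb (abs_nonneg r)
      _ = C * r ^ 2 := by
          rw [hCdef, ← sq_abs r]
          ring
  -- conclude: the derivative at 0 is 0
  have hF0 : F 0 = 0 := by
    have h1 := hFb 0 (by simpa using hδpos.le)
    simp only [ne_eq, OfNat.ofNat_ne_zero, not_false_eq_true, zero_pow, mul_zero] at h1
    exact abs_nonpos_iff.mp h1
  rw [hasDerivAt_iff_tendsto_slope]
  apply squeeze_zero_norm' (a := fun r : ℝ => C * |r|)
  · have h1 : ∀ᶠ r : ℝ in nhds (0:ℝ), |r| ≤ δ := by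
      filter_upwards [Metric.ball_mem_nhds (0:ℝ) hδpos] with r hr
      rw [Metric.mem_ball, Real.dist_eq, sub_zero] at hr
      exact hr.le
    filter_upwards [h1.filter_mono nhdsWithin_le_nhds, self_mem_nhdsWithin] with r hr hr0
    have hr0' : r ≠ 0 := hr0
    calc ‖slope F 0 r‖ = |F r| / |r| := by
          rw [slope_def_field, hF0, sub_zero, sub_zero]
          rw [Real.norm_eq_abs, abs_div]
      _ ≤ (C * r ^ 2) / |r| := (div_le_div_iff_of_pos_right (abs_pos.mpr hr0')).mpr (hFb r hr)
      _ = C * |r| := by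
          rw [div_eq_iff (abs_ne_zero.mpr hr0'), ← sq_abs r]
          ring
  · have h2 : Tendsto (fun r : ℝ => C * |r|) (nhds (0:ℝ)) (nhds (C * |(0:ℝ)|)) :=
      (continuous_const.mul continuous_abs).tendsto 0
    simp only [abs_zero, mul_zero] at h2
    exact h2.mono_left nhdsWithin_le_nhds

end
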